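/- If a symmetric positive semi-definite matrix L ∈ R^{dn×dn} has null space exactly span{1⊗I_d, p} with the points p_1,...,p_n ∈ R^d not all equal pairwise (specifically p_i ≠ p_j for i ≠ j among the first k indices), and k ≥ 2, then the trailing diagonal block L_ff (corresponding to indices k+1,...,n) is positive definite. -/

import Mathlib

open Matrix

/-- The vector `1 ⊗ ê_a ∈ ℝ^{dn}`, indexed by (agent, coordinate). -/
def onesVec {n d : ℕ} (a : Fin d) : Fin n × Fin d → ℝ :=
  fun q => if q.2 = a then 1 else 0

lemma span_onesVec_const {n d : ℕ} (w : Fin n × Fin d → ℝ)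
    (hw : w ∈ Submodule.span ℝ (Set.range (onesVec (n := n) (d := d)))) :
    ∀ i j : Fin n, ∀ a : Fin d, w (i, a) = w (j, a) := by
  induction hw using Submodule.span_induction with
  | mem v hv =>
    obtain ⟨a0, rfl⟩ := hv
    intro i j a
    simp [onesVec]
  | zero => intro i j a; simp
  | add u v _ _ hu hv => intro i j a; simp [hu i j a, hv i j a]
  | smul c v _ hv => intro i j a; simp [hv i j a]

lemma sum_extension {n d k : ℕ}
    (g : Fin n × Fin d → ℝ) (hg : ∀ q : Fin n × Fin d, ¬ k ≤ (q.1 : ℕ) → g q = 0) :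
    ∑ q' : Fin n × Fin d, g q' =
      ∑ q : {i : Fin n // k ≤ (i : ℕ)} × Fin d, g ((q.1 : Fin n), q.2) := by
  classical
  have hinj : Function.Injective
      (fun q : {i : Fin n // k ≤ (i : ℕ)} × Fin d => ((q.1 : Fin n), q.2)) := by
    intro q r h
    simp only [Prod.mk.injEq] at h
    exact Prod.ext (Subtype.ext h.1) h.2
  rw [← Finset.sum_image (f := g)
    (g := fun q : {i : Fin n // k ≤ (i : ℕ)} × Fin d => ((q.1 : Fin n), q.2))
    (fun x _ y _ h => hinj h)]
  refine (Finset.sum_subset (Finset.subset_univ _) ?_).symm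
  intro q _ hq
  apply hg
  intro hkq
  exact hq (Finset.mem_image.mpr ⟨(⟨q.1, hkq⟩, q.2), Finset.mem_univ _, rfl⟩)

/-- If a symmetric PSD matrix `L ∈ ℝ^{dn×dn}` has null space exactly
`span{1⊗I_d, p}` with the points `p_i` pairwise distinct, and the number of
leaders `k ≥ 2`, then the follower diagonal block `L_ff` (agents `k+1, …, n`)
is positive definite. -/
theorem stmt17 {n d k : ℕ} (hd : 2 ≤ d) (hn : 2 ≤ n) (hk : 2 ≤ k) (hkn : k ≤ n)
    (p : Fin n → Fin d → ℝ) (hdist : ∀ i j : Fin n, i ≠ j → p i ≠ p j)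
    (L : Matrix (Fin n × Fin d) (Fin n × Fin d) ℝ) (hL : L.PosSemidef)
    (hnull : ∀ z, L *ᵥ z = 0 ↔
      z ∈ Submodule.span ℝ
        ({fun q => p q.1 q.2} ∪ Set.range (onesVec (n := n) (d := d)))) :
    (L.submatrix
        (fun q : {i : Fin n // k ≤ (i : ℕ)} × Fin d => ((q.1 : Fin n), q.2))
        (fun q : {i : Fin n // k ≤ (i : ℕ)} × Fin d => ((q.1 : Fin n), q.2))).PosDef := by
  classical
  set e := fun q : {i : Fin n // k ≤ (i : ℕ)} × Fin d => ((q.1 : Fin n), q.2) with he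
  refine posDef_iff_dotProduct_mulVec.mpr ⟨hL.isHermitian.submatrix e, fun x hx => ?_⟩
  -- the zero-extension of x
  set z : Fin n × Fin d → ℝ :=
    fun q => if h : k ≤ (q.1 : ℕ) then x (⟨q.1, h⟩, q.2) else 0 with hz
  have hze : ∀ q, z (e q) = x q := by
    rintro ⟨⟨i, hi⟩, a⟩
    simp only [hz, he]
    rw [dif_pos hi]
  have hz0 : ∀ q : Fin n × Fin d, ¬ k ≤ (q.1 : ℕ) → z q = 0 := by
    intro q hq; simp [hz, hq]
  -- quadratic forms agree
  have hquad : x ⬝ᵥ (L.submatrix e e) *ᵥ x = z ⬝ᵥ L *ᵥ z := by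
    simp only [dotProduct, mulVec]
    rw [sum_extension (k := k) (fun q' => z q' * ∑ r', L q' r' * z r')
      (fun q hq => by simp [hz0 q hq])]
    refine Finset.sum_congr rfl fun q _ => ?_
    rw [hze]
    congr 1
    rw [sum_extension (k := k) (fun r' => L (e q) r' * z r')
      (fun r hr => by simp [hz0 r hr])]
    exact Finset.sum_congr rfl fun r _ => by rw [hze]; rfl
  -- nonnegativity
  have hnonneg : 0 ≤ x ⬝ᵥ (L.submatrix e e) *ᵥ x := by
    rw [hquad]
    simpa using (posSemidef_iff_dotProduct_mulVec.mp hL).2 z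
  rcases lt_or_eq_of_le hnonneg with h | h
  · simpa using h
  -- if the form vanishes, x = 0, contradiction
  exfalso
  have hLz : L *ᵥ z = 0 := by
    rw [← hL.dotProduct_mulVec_zero_iff z]
    simpa using (hquad ▸ h.symm)
  have hmem := (hnull z).mp hLz
  rw [Submodule.span_union, Submodule.mem_sup] at hmem
  obtain ⟨a, ha, b, hb, hab⟩ := hmem
  rw [Submodule.mem_span_singleton] at ha
  obtain ⟨c, rfl⟩ := ha
  have hbconst := span_onesVec_const b hb
  -- two distinct leader indices
  have h0n : (0 : ℕ) < n := by omega
  have h1n : (1 : ℕ) < n := by omega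
  set i0 : Fin n := ⟨0, h0n⟩
  set i1 : Fin n := ⟨1, h1n⟩
  have hzi0 : ∀ a : Fin d, z (i0, a) = 0 := by
    intro a; apply hz0; simp [i0]; omega
  have hzi1 : ∀ a : Fin d, z (i1, a) = 0 := by
    intro a; apply hz0; simp [i1]; omega
  have hzval : ∀ q : Fin n × Fin d, z q = c * p q.1 q.2 + b q := by
    intro q
    have := congrFun hab q
    simpa [Pi.add_apply, Pi.smul_apply, smul_eq_mul] using this.symm
  have hc : c = 0 := by
    by_contra hc
    apply hdist i0 i1 (by simp [i0, i1, Fin.ext_iff])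
    funext a
    have e0 := hzval (i0, a)
    have e1 := hzval (i1, a)
    rw [hzi0 a] at e0
    rw [hzi1 a] at e1
    have hbeq := hbconst i0 i1 a
    have : c * p i0 a = c * p i1 a := by linarith
    exact mul_left_cancel₀ hc this
  have hb0 : ∀ q : Fin n × Fin d, b q = 0 := by
    intro q
    have e0 := hzval (i0, q.2)
    rw [hzi0 q.2, hc] at e0
    have hbeq := hbconst q.1 i0 q.2
    simp at e0
    rw [show q = (q.1, q.2) from rfl, hbeq]
    linarith
  have hzz : ∀ q, z q = 0 := by
    intro q
    rw [hzval q, hc, hb0 q]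
    ring
  apply hx
  funext q
  rw [← hze q, hzz]
  rfl
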